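/- Let A be a set of k ≥ 3 positive integers, let r be a positive integer, and let H be a set of t ≥ 2 positive integers with 1 ≤ r ≤ max(H) ≤ (k−1)r − 1. Then |H^{(r)}A| ≥ L(H, r, k). -/

import Mathlib

/-- The generalized `h`-fold sumset `h^(r)A`: all sums of `h` elements of `A`
where every summand appears at most `r` times. -/
def genSumset (r h : ℕ) (A : Finset ℤ) : Set ℤ :=
  {x | ∃ lam : ℤ → ℕ, (∀ a, lam a ≤ r) ∧ (∀ a ∉ A, lam a = 0) ∧
    (∑ a ∈ A, lam a) = h ∧ (∑ a ∈ A, (lam a : ℤ) * a) = x}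

/-- The generalized `H`-fold sumset `H^(r)A = ⋃_{h ∈ H} h^(r)A`. -/
def HSumset (r : ℕ) (H : Finset ℕ) (A : Finset ℤ) : Set ℤ :=
  ⋃ h ∈ H, genSumset r h A

/-- The quantity `L(H, r, k)` where `H = {h 1 < h 2 < ⋯ < h t}`, `h 0 = 0`,
`m_i = ⌊h_i / r⌋` and `ε_i = h_i mod r`. -/
def Lbound (r : ℕ) (h : ℕ → ℕ) (t k : ℕ) : ℤ :=
  ∑ i ∈ Finset.Icc 1 t,
    ((r : ℤ) * (((h i / r : ℕ) : ℤ) - ((h (i - 1) / r : ℕ) : ℤ)) * ((k : ℤ) - ((h i / r : ℕ) : ℤ))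
      + (((h i % r : ℕ) : ℤ) - ((h (i - 1) % r : ℕ) : ℤ)) * ((k : ℤ) - ((h i / r : ℕ) : ℤ) - 1)
      - ((max (h i % r) (h (i - 1) % r) : ℕ) : ℤ)
          * (((h i / r : ℕ) : ℤ) - ((h (i - 1) / r : ℕ) : ℤ))
      + 1)

def Fcum (c : ℕ → ℕ) (p : ℕ) : ℕ := ∑ j ∈ Finset.range p, c j

def Wt (k : ℕ) (c : ℕ → ℕ) : ℕ := ∑ p ∈ Finset.range k, Fcum c p

def sumc (a : ℕ → ℤ) (k : ℕ) (c : ℕ → ℕ) : ℤ := ∑ j ∈ Finset.range k, (c j : ℤ) * a j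

def topC (r k h : ℕ) : ℕ → ℕ := fun j => if j < k then min r (h - r * (k - 1 - j)) else 0

def botC (r d : ℕ) : ℕ → ℕ := fun j => min r (d - r * j)

lemma Fcum_succ (c : ℕ → ℕ) (p : ℕ) : Fcum c (p + 1) = Fcum c p + c p :=
  Finset.sum_range_succ c p

lemma Fcum_add (c1 c2 : ℕ → ℕ) (p : ℕ) :
    Fcum (fun j => c1 j + c2 j) p = Fcum c1 p + Fcum c2 p :=
  Finset.sum_add_distrib

lemma Fcum_mono (c : ℕ → ℕ) : Monotone (Fcum c) := by
  intro i j hij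
  exact Finset.sum_le_sum_of_subset (Finset.range_subset_range.2 hij)

lemma Fcum_botC (r d : ℕ) (p : ℕ) : Fcum (botC r d) p = min d (r * p) := by
  induction p with
  | zero => simp [Fcum]
  | succ p ih =>
    rw [Fcum_succ, ih]
    show min d (r * p) + min r (d - r * p) = min d (r * (p + 1))
    have h1 : r * (p + 1) = r * p + r := by ring
    rw [h1]
    set y := r * p with hy
    omega

lemma Fcum_topC (r k h : ℕ) (hh : h ≤ r * k) : ∀ p ≤ k, Fcum (topC r k h) p = h - r * (k - p) := by
  intro p hp
  induction p with
  | zero =>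
    show (0:ℕ) = h - r * (k - 0)
    simp only [Nat.sub_zero]
    omega
  | succ p ih =>
    rw [Fcum_succ, ih (by omega)]
    have hpk : p < k := hp
    have h1 : topC r k h p = min r (h - r * (k - 1 - p)) := by simp [topC, hpk]
    rw [h1]
    set x := r * (k - 1 - p) with hx
    have h3 : r * (k - p) = x + r := by
      rw [hx, ← Nat.mul_succ]
      congr 1
      omega
    have h6 : r * (k - (p + 1)) = x := by rw [hx]; congr 1; omega
    rw [h3, h6]
    have h4 : x + r ≤ r * k := by
      rw [hx, ← Nat.mul_succ]
      exact Nat.mul_le_mul_left r (by omega)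
    omega

lemma Fcum_total_topC (r k h : ℕ) (hh : h ≤ r * k) : Fcum (topC r k h) k = h := by
  rw [Fcum_topC r k h hh k le_rfl]; simp

lemma Fcum_dominance (r k h : ℕ) (c : ℕ → ℕ) (hv : ∀ j, c j ≤ r) (htot : Fcum c k = h)
    (p : ℕ) (hp : p ≤ k) : h - r * (k - p) ≤ Fcum c p := by
  have h1 : Fcum c k ≤ Fcum c p + r * (k - p) := by
    have heq : Fcum c k = Fcum c p + ∑ j ∈ Finset.Ico p k, c j := by
      rw [Fcum, Fcum, ← Finset.sum_range_add_sum_Ico c hp]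
    rw [heq]
    have h2 : ∑ j ∈ Finset.Ico p k, c j ≤ ∑ j ∈ Finset.Ico p k, r :=
      Finset.sum_le_sum (fun j _ => hv j)
    simp only [Finset.sum_const, Nat.card_Ico, smul_eq_mul] at h2
    have h3 : (k - p) * r = r * (k - p) := Nat.mul_comm _ _
    omega
  omega

lemma Wt_add (k : ℕ) (c1 c2 : ℕ → ℕ) :
    Wt k (fun j => c1 j + c2 j) = Wt k c1 + Wt k c2 := by
  unfold Wt
  rw [← Finset.sum_add_distrib]
  exact Finset.sum_congr rfl (fun p _ => Fcum_add c1 c2 p)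

lemma Wt_topC (r k h m ε : ℕ) (hm : m < k) (hh : h = m * r + ε) (hε : ε < r) :
    Wt k (topC r k h) = m * ε + r * (∑ i ∈ Finset.range m, i) := by
  have hhk : h ≤ r * k := by
    calc h = m * r + ε := hh
      _ ≤ m * r + r := by omega
      _ = r * (m + 1) := by ring
      _ ≤ r * k := Nat.mul_le_mul_left r (by omega)
  have e1 : Wt k (topC r k h) = ∑ p ∈ Finset.range k, (h - r * (k - p)) := by
    unfold Wt
    exact Finset.sum_congr rfl (fun p hp =>
      Fcum_topC r k h hhk p (le_of_lt (Finset.mem_range.1 hp)))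
  have e2 : ∑ p ∈ Finset.range k, (h - r * (k - p)) = ∑ j ∈ Finset.range k, (h - r * (j + 1)) := by
    rw [← Finset.sum_range_reflect (fun j => h - r * (j + 1)) k]
    exact Finset.sum_congr rfl (fun p hp => by
      have hpk : p < k := Finset.mem_range.1 hp
      congr 2
      omega)
  rw [e1, e2]
  have hsplit : Finset.range k = Finset.range m ∪ Finset.Ico m k := by
    rw [Finset.range_eq_Ico, Finset.range_eq_Ico]
    exact (Finset.Ico_union_Ico_eq_Ico (Nat.zero_le m) (le_of_lt hm)).symm
  rw [hsplit, Finset.sum_union (by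
    rw [Finset.range_eq_Ico]
    exact Finset.Ico_disjoint_Ico_consecutive 0 m k)]
  have e3 : ∑ j ∈ Finset.Ico m k, (h - r * (j + 1)) = 0 := by
    apply Finset.sum_eq_zero
    intro j hj
    have hjm : m ≤ j := (Finset.mem_Ico.1 hj).1
    have : h ≤ r * (j + 1) := by
      calc h = m * r + ε := hh
        _ ≤ m * r + r := by omega
        _ = r * (m + 1) := by ring
        _ ≤ r * (j + 1) := Nat.mul_le_mul_left r (by omega)
    omega
  rw [e3, Nat.add_zero]
  have e4 : ∀ j ∈ Finset.range m, h - r * (j + 1) = ε + r * (m - 1 - j) := by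
    intro j hj
    have hjm : j < m := Finset.mem_range.1 hj
    have h1 : r * (j + 1) + r * (m - 1 - j) = r * m := by
      rw [← Nat.mul_add]
      congr 1
      omega
    have h2 : h = r * m + ε := by rw [hh]; ring
    omega
  rw [Finset.sum_congr rfl e4, Finset.sum_add_distrib, Finset.sum_const, Finset.card_range,
    ← Finset.mul_sum, smul_eq_mul]
  congr 1
  rw [← Finset.sum_range_reflect (fun j => j) m]

lemma Wt_botC (r k d q s : ℕ) (hq : q + 1 ≤ k) (hd : d = q * r + s) (hs : s < r) :
    Wt k (botC r d) = r * ((∑ i ∈ Finset.range q, i) + q) + d * (k - 1 - q) := by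
  have e1 : Wt k (botC r d) = ∑ p ∈ Finset.range k, min d (r * p) := by
    unfold Wt
    exact Finset.sum_congr rfl (fun p _ => Fcum_botC r d p)
  rw [e1]
  have hsplit : Finset.range k = Finset.range (q+1) ∪ Finset.Ico (q+1) k := by
    rw [Finset.range_eq_Ico, Finset.range_eq_Ico]
    exact (Finset.Ico_union_Ico_eq_Ico (Nat.zero_le _) hq).symm
  rw [hsplit, Finset.sum_union (by
    rw [Finset.range_eq_Ico]
    exact Finset.Ico_disjoint_Ico_consecutive 0 (q+1) k)]
  have e2 : ∀ p ∈ Finset.range (q+1), min d (r * p) = r * p := by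
    intro p hp
    have hpq : p ≤ q := by
      have := Finset.mem_range.1 hp
      omega
    apply min_eq_right
    calc r * p ≤ r * q := Nat.mul_le_mul_left r hpq
      _ = q * r := Nat.mul_comm r q
      _ ≤ d := by omega
  have e3 : ∀ p ∈ Finset.Ico (q+1) k, min d (r * p) = d := by
    intro p hp
    have hpq : q + 1 ≤ p := (Finset.mem_Ico.1 hp).1
    apply min_eq_left
    calc d = q * r + s := hd
      _ ≤ q * r + r := by omega
      _ = r * (q + 1) := by ring
      _ ≤ r * p := Nat.mul_le_mul_left r hpq
  rw [Finset.sum_congr rfl e2, Finset.sum_congr rfl e3, Finset.sum_const, Nat.card_Ico,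
    smul_eq_mul, ← Finset.mul_sum, Finset.sum_range_succ]
  have : k - (q + 1) = k - 1 - q := by omega
  rw [this, Nat.mul_comm (k - 1 - q) d]

lemma chain (k r h : ℕ) (hr : 1 ≤ r) (a : ℕ → ℤ)
    (ha : ∀ i j : ℕ, i < j → j < k → a i < a j)
    (c1 : ℕ → ℕ) (hv1 : ∀ j, c1 j ≤ r) (ht1 : Fcum c1 k = h) :
    ∀ n (c0 : ℕ → ℕ), (∀ j, c0 j ≤ r) → (∀ j, k ≤ j → c0 j = 0) → Fcum c0 k = h →
      (∀ p, p ≤ k → Fcum c1 p ≤ Fcum c0 p) → Wt k c0 = Wt k c1 + n →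
      ∃ S : Finset ℤ, S.card = n + 1 ∧ ∀ x ∈ S,
        (∃ c : ℕ → ℕ, (∀ j, c j ≤ r) ∧ Fcum c k = h ∧ sumc a k c = x)
        ∧ sumc a k c0 ≤ x ∧ x ≤ sumc a k c1 := by
  intro n
  induction n with
  | zero =>
    intro c0 hv0 hsupp htot hdom hWt
    have hFeq : ∀ p ∈ Finset.range k, Fcum c1 p = Fcum c0 p := by
      rw [← Finset.sum_eq_sum_iff_of_le
        (fun p hp => hdom p (le_of_lt (Finset.mem_range.1 hp)))]
      have hWt2 : (∑ p ∈ Finset.range k, Fcum c0 p) = (∑ p ∈ Finset.range k, Fcum c1 p) + 0 := hWt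
      omega
    have hceq : ∀ j ∈ Finset.range k, c0 j = c1 j := by
      intro j hj
      have hjk : j < k := Finset.mem_range.1 hj
      have h1 : Fcum c0 (j + 1) = Fcum c0 j + c0 j := Fcum_succ c0 j
      have h2 : Fcum c1 (j + 1) = Fcum c1 j + c1 j := Fcum_succ c1 j
      have h3 : Fcum c1 j = Fcum c0 j := hFeq j hj
      rcases Nat.lt_or_ge (j + 1) k with h4 | h4
      · have h5 : Fcum c1 (j + 1) = Fcum c0 (j + 1) := hFeq (j + 1) (Finset.mem_range.2 h4)
        omega
      · have h6 : j + 1 = k := by omega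
        rw [h6] at h1 h2
        omega
    have hsumeq : sumc a k c0 = sumc a k c1 := by
      unfold sumc
      exact Finset.sum_congr rfl (fun j hj => by rw [hceq j hj])
    refine ⟨{sumc a k c0}, by simp, ?_⟩
    intro x hx
    rw [Finset.mem_singleton] at hx
    subst hx
    exact ⟨⟨c0, hv0, htot, rfl⟩, le_refl _, le_of_eq hsumeq⟩
  | succ n ih =>
    intro c0 hv0 hsupp htot hdom hWt
    have hex : ∃ p, p < k ∧ Fcum c1 p < Fcum c0 p := by
      by_contra hcon
      push_neg at hcon
      have : Wt k c0 = Wt k c1 := by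
        unfold Wt
        exact Finset.sum_congr rfl (fun p hp => by
          have hpk := Finset.mem_range.1 hp
          exact le_antisymm (hcon p hpk) (hdom p (le_of_lt hpk)))
      omega
    set p := Nat.find hex with hpdef
    obtain ⟨hpk, hpstrict⟩ : p < k ∧ Fcum c1 p < Fcum c0 p := Nat.find_spec hex
    have hp1 : 1 ≤ p := by
      rcases Nat.eq_zero_or_pos p with h0 | h0
      · exfalso
        rw [h0] at hpstrict
        simp [Fcum] at hpstrict
      · exact h0
    have hpm1 : Fcum c0 (p - 1) ≤ Fcum c1 (p - 1) := by
      have := Nat.find_min hex (m := p - 1) (by omega)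
      push_neg at this
      exact le_of_not_gt fun hlt => absurd (this (by omega)) (not_le.2 hlt)
    have hexq : ∃ q', p ≤ q' ∧ c0 q' < r := by
      refine ⟨k, le_of_lt hpk, ?_⟩
      rw [hsupp k le_rfl]
      omega
    set q := Nat.find hexq with hqdef
    obtain ⟨hpq, hcqr⟩ : p ≤ q ∧ c0 q < r := Nat.find_spec hexq
    have hcr : ∀ j, p ≤ j → j < q → c0 j = r := by
      intro j hj1 hj2
      have := Nat.find_min hexq hj2
      push_neg at this
      exact le_antisymm (hv0 j) (this hj1)
    have strict : ∀ j, p ≤ j → j ≤ q → Fcum c1 j < Fcum c0 j := by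
      intro j hj1
      induction j, hj1 using Nat.le_induction with
      | base => intro _; exact hpstrict
      | succ j hj ihj =>
        intro hjq
        have hjltq : j < q := by omega
        have h1 : Fcum c1 j < Fcum c0 j := ihj (by omega)
        have h2 : Fcum c0 (j + 1) = Fcum c0 j + r := by
          rw [Fcum_succ, hcr j hj hjltq]
        have h3 : Fcum c1 (j + 1) = Fcum c1 j + c1 j := Fcum_succ c1 j
        have h4 : c1 j ≤ r := hv1 j
        omega
    have hqk : q < k := by
      by_contra hcon
      push_neg at hcon
      have := strict k (le_of_lt hpk) hcon
      omega
    have hq1 : 1 ≤ q := le_trans hp1 hpq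
    have hcq1 : 0 < c0 (q - 1) := by
      rcases Nat.eq_or_lt_of_le hpq with heq | hlt
      · -- q = p
        have h1 : Fcum c0 p = Fcum c0 (p - 1) + c0 (p - 1) := by
          conv_lhs => rw [show p = (p - 1) + 1 by omega]
          exact Fcum_succ c0 (p - 1)
        have h2 : Fcum c1 (p - 1) ≤ Fcum c1 p := Fcum_mono c1 (by omega)
        rw [← heq]
        omega
      · have := hcr (q - 1) (by omega) (by omega)
        omega
    set c0' : ℕ → ℕ := fun j => if j = q - 1 then c0 (q-1) - 1
      else if j = q then c0 q + 1 else c0 j with hc0'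
    have hne : q - 1 ≠ q := by omega
    have hv0' : ∀ j, c0' j ≤ r := by
      intro j
      simp only [hc0']
      split_ifs with h1 h2
      · exact le_trans (Nat.sub_le _ _) (hv0 _)
      · omega
      · exact hv0 j
    have hsupp' : ∀ j, k ≤ j → c0' j = 0 := by
      intro j hj
      simp only [hc0']
      rw [if_neg (by omega), if_neg (by omega)]
      exact hsupp j hj
    have hF' : ∀ p', Fcum c0' p' + (if p' = q then 1 else 0) = Fcum c0 p' := by
      intro p'
      induction p' with
      | zero =>
        simp only [Fcum, Finset.range_zero, Finset.sum_empty]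
        rw [if_neg (by omega : ¬(0 = q))]
        omega
      | succ p' ihp =>
        rw [Fcum_succ, Fcum_succ]
        by_cases h1 : p' = q - 1
        · subst h1
          have hc : c0' (q - 1) = c0 (q - 1) - 1 := by
            simp only [hc0']
            split_ifs <;> omega
          rw [if_neg hne] at ihp
          rw [hc, if_pos (show q - 1 + 1 = q by omega)]
          omega
        · by_cases h2 : p' = q
          · subst h2
            have hc : c0' q = c0 q + 1 := by
              simp only [hc0']
              split_ifs <;> omega
            rw [if_pos rfl] at ihp
            rw [hc, if_neg (by omega : ¬(q + 1 = q))]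
            omega
          · have hc : c0' p' = c0 p' := by
              simp only [hc0']
              rw [if_neg h1, if_neg h2]
            rw [if_neg h2] at ihp
            rw [hc, if_neg (by omega : ¬(p' + 1 = q))]
            omega
    have htot' : Fcum c0' k = h := by
      have := hF' k
      rw [if_neg (by omega)] at this
      omega
    have hdom' : ∀ p', p' ≤ k → Fcum c1 p' ≤ Fcum c0' p' := by
      intro p' hp'
      have h1 := hF' p'
      by_cases h2 : p' = q
      · rw [if_pos h2] at h1
        have h3 := strict q hpq le_rfl
        rw [h2]
        rw [h2] at h1
        omega
      · rw [if_neg h2] at h1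
        have := hdom p' hp'
        omega
    have hWt' : Wt k c0' + 1 = Wt k c0 := by
      unfold Wt
      have h1 : ∑ p' ∈ Finset.range k, Fcum c0 p'
          = ∑ p' ∈ Finset.range k, (Fcum c0' p' + (if p' = q then 1 else 0)) :=
        Finset.sum_congr rfl (fun p' _ => (hF' p').symm)
      rw [h1, Finset.sum_add_distrib, Finset.sum_ite_eq' (Finset.range k) q (fun _ => 1),
        if_pos (Finset.mem_range.2 hqk)]
    have hsum' : sumc a k c0' = sumc a k c0 + (a q - a (q - 1)) := by
      unfold sumc
      have hterm : ∀ j ∈ Finset.range k, (c0' j : ℤ) * a j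
          = (c0 j : ℤ) * a j + ((if j = q - 1 then -a (q-1) else 0)
            + (if j = q then a q else 0)) := by
        intro j _
        by_cases h1 : j = q - 1
        · subst h1
          have hc : c0' (q - 1) = c0 (q - 1) - 1 := by
            simp only [hc0']
            split_ifs <;> omega
          rw [hc, if_pos rfl, if_neg hne, Nat.cast_sub hcq1]
          push_cast
          ring
        · by_cases h2 : j = q
          · subst h2
            have hc : c0' q = c0 q + 1 := by
              simp only [hc0']
              split_ifs <;> omega
            rw [hc, if_neg (Ne.symm hne), if_pos rfl]
            push_cast
            ring
          · have hc : c0' j = c0 j := by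
              simp only [hc0']
              rw [if_neg h1, if_neg h2]
            rw [hc, if_neg h1, if_neg h2]
            ring
      rw [Finset.sum_congr rfl hterm, Finset.sum_add_distrib, Finset.sum_add_distrib,
        Finset.sum_ite_eq' (Finset.range k) (q-1) (fun _ => -a (q-1)),
        Finset.sum_ite_eq' (Finset.range k) q (fun _ => a q),
        if_pos (Finset.mem_range.2 (by omega : q - 1 < k)),
        if_pos (Finset.mem_range.2 hqk)]
      ring
    have hlt : sumc a k c0 < sumc a k c0' := by
      have := ha (q-1) q (by omega) hqk
      rw [hsum']
      linarith
    obtain ⟨S', hcard', hS'⟩ := ih c0' hv0' hsupp' htot' hdom' (by omega)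
    have hnotmem : sumc a k c0 ∉ S' := by
      intro hmem
      have := (hS' _ hmem).2.1
      linarith
    refine ⟨insert (sumc a k c0) S', ?_, ?_⟩
    · rw [Finset.card_insert_of_notMem hnotmem, hcard']
    · intro x hx
      rcases Finset.mem_insert.1 hx with h1 | h1
      · subst h1
        have hne' : S'.Nonempty := Finset.card_pos.1 (by omega)
        obtain ⟨y, hy⟩ := hne'
        have hyp := hS' y hy
        exact ⟨⟨c0, hv0, htot, rfl⟩, le_refl _, by linarith [hyp.2.1, hyp.2.2]⟩
      · have hxp := hS' x h1
        exact ⟨hxp.1, by linarith [hxp.2.1], hxp.2.2⟩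

lemma gauss (q : ℕ) : 2 * ((∑ i ∈ Finset.range q, i : ℕ) : ℤ) = q * q - q := by
  induction q with
  | zero => simp
  | succ q ih =>
    rw [Finset.sum_range_succ]
    push_cast
    push_cast at ih
    linear_combination ih

lemma sumc_add (a : ℕ → ℤ) (k : ℕ) (c1 c2 : ℕ → ℕ) :
    sumc a k (fun j => c1 j + c2 j) = sumc a k c1 + sumc a k c2 := by
  unfold sumc
  rw [← Finset.sum_add_distrib]
  exact Finset.sum_congr rfl (fun j _ => by push_cast; ring)

lemma block (k r h' h : ℕ) (hr : 1 ≤ r) (hk : 3 ≤ k) (a : ℕ → ℤ)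
    (ha : ∀ i j : ℕ, i < j → j < k → a i < a j) (ha1 : ∀ j, j < k → 1 ≤ a j)
    (hlt : h' < h) (hub : h ≤ (k - 1) * r - 1) :
    ∃ S : Finset ℤ,
      (((r:ℤ) * (((h / r : ℕ) : ℤ) - ((h' / r : ℕ) : ℤ)) * ((k : ℤ) - ((h / r : ℕ) : ℤ))
        + (((h % r : ℕ) : ℤ) - ((h' % r : ℕ) : ℤ)) * ((k : ℤ) - ((h / r : ℕ) : ℤ) - 1)
        - ((max (h % r) (h' % r) : ℕ) : ℤ) * (((h / r : ℕ) : ℤ) - ((h' / r : ℕ) : ℤ))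
        + 1) ≤ (S.card : ℤ))
      ∧ ∀ x ∈ S, (∃ c : ℕ → ℕ, (∀ j, c j ≤ r) ∧ Fcum c k = h ∧ sumc a k c = x)
        ∧ sumc a k (topC r k h') < x ∧ x ≤ sumc a k (topC r k h) := by
  set m := h / r with hm_def
  set ε := h % r with hε_def
  set m' := h' / r with hm'_def
  set ε' := h' % r with hε'_def
  set δ := h - h' with hδ_def
  clear_value m ε m' ε' δ
  have hεr : ε < r := by rw [hε_def]; exact Nat.mod_lt _ hr
  have hε'r : ε' < r := by rw [hε'_def]; exact Nat.mod_lt _ hr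
  have hmr : r * m + ε = h := by rw [hm_def, hε_def]; exact Nat.div_add_mod h r
  have hm'r : r * m' + ε' = h' := by rw [hm'_def, hε'_def]; exact Nat.div_add_mod h' r
  have hmr2 : m * r + ε = h := by rw [Nat.mul_comm] at hmr; exact hmr
  have hm'r2 : m' * r + ε' = h' := by rw [Nat.mul_comm] at hm'r; exact hm'r
  have hub2 : h + 1 ≤ r * (k - 1) := by
    have h1 : (k-1) * r = r * (k-1) := Nat.mul_comm _ _
    omega
  have hmk : m < k - 1 := by
    have h1 : r * m ≤ h := by omega
    have h2 : r * m < r * (k - 1) := by omega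
    exact Nat.lt_of_mul_lt_mul_left h2
  have hm'm : m' ≤ m := by rw [hm_def, hm'_def]; exact Nat.div_le_div_right (le_of_lt hlt)
  have hm'k : m' + 1 ≤ k - 1 := by omega
  have hrk : r * (k - 1 - m') + r * m' = r * (k - 1) := by
    rw [← Nat.mul_add]
    congr 1
    omega
  have hδub : δ + 1 ≤ r * (k - 1 - m') := by omega
  have hδ1 : 1 ≤ δ := by omega
  have hδk : δ + 1 ≤ r * k := by
    have : r * (k - 1 - m') ≤ r * k := Nat.mul_le_mul_left r (show k - 1 - m' ≤ k by omega)
    omega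
  have hhk : h ≤ r * k := by
    have : r * (k-1) ≤ r * k := Nat.mul_le_mul_left r (show k - 1 ≤ k by omega)
    omega
  have hh'k : h' ≤ r * k := by omega
  -- support/vanishing facts
  have htopz : ∀ j, j < k - 1 - m' → topC r k h' j = 0 := by
    intro j hj
    have hjk : j < k := by omega
    have h1 : m' + 1 ≤ k - 1 - j := by omega
    have h2 : h' ≤ r * (k - 1 - j) := by
      calc h' = r * m' + ε' := hm'r.symm
        _ ≤ r * m' + r := by omega
        _ = r * (m' + 1) := by ring
        _ ≤ r * (k - 1 - j) := Nat.mul_le_mul_left r h1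
    simp only [topC, if_pos hjk]
    rw [Nat.sub_eq_zero_of_le h2]
    simp
  have hbotz : ∀ j, k - 1 - m' ≤ j → botC r δ j = 0 := by
    intro j hj
    have h2 : δ ≤ r * j := by
      have : r * (k - 1 - m') ≤ r * j := Nat.mul_le_mul_left r hj
      omega
    simp only [botC]
    rw [Nat.sub_eq_zero_of_le h2]
    simp
  set c0 : ℕ → ℕ := fun j => botC r δ j + topC r k h' j with hc0
  set c1 : ℕ → ℕ := topC r k h with hc1
  have hv1 : ∀ j, c1 j ≤ r := by
    intro j
    simp only [hc1, topC]
    split_ifs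
    · exact min_le_left _ _
    · omega
  have ht1 : Fcum c1 k = h := Fcum_total_topC r k h hhk
  have hv0 : ∀ j, c0 j ≤ r := by
    intro j
    simp only [hc0]
    rcases Nat.lt_or_ge j (k - 1 - m') with hj | hj
    · rw [htopz j hj]
      exact le_trans (le_of_eq (Nat.add_zero _)) (min_le_left _ _)
    · rw [hbotz j hj]
      simp only [Nat.zero_add]
      simp only [topC]
      split_ifs
      · exact min_le_left _ _
      · omega
  have hsupp0 : ∀ j, k ≤ j → c0 j = 0 := by
    intro j hj
    simp only [hc0]
    rw [hbotz j (by omega)]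
    simp only [topC, if_neg (by omega : ¬ j < k)]
  have htot0 : Fcum c0 k = h := by
    simp only [hc0]
    rw [Fcum_add, Fcum_botC, Fcum_total_topC r k h' hh'k]
    rw [min_eq_left (by omega)]
    omega
  have hdom0 : ∀ p, p ≤ k → Fcum c1 p ≤ Fcum c0 p := by
    intro p hp
    rw [hc1, Fcum_topC r k h hhk p hp]
    exact Fcum_dominance r k h c0 hv0 htot0 p hp
  have hWtle : Wt k c1 ≤ Wt k c0 := by
    unfold Wt
    exact Finset.sum_le_sum (fun p hp => hdom0 p (le_of_lt (Finset.mem_range.1 hp)))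
  set n := Wt k c0 - Wt k c1 with hn_def
  have hWtn : Wt k c0 = Wt k c1 + n := by omega
  obtain ⟨S, hcard, hS⟩ := chain k r h hr a ha c1 hv1 ht1 n c0 hv0 hsupp0 htot0 hdom0 hWtn
  refine ⟨S, ?_, ?_⟩
  · -- cardinality bound
    rw [hcard]
    push_cast
    -- closed forms
    have hWt0 : Wt k c0 = Wt k (botC r δ) + Wt k (topC r k h') := by
      simp only [hc0]
      exact Wt_add k _ _
    have hWtt : Wt k c1 = m * ε + r * (∑ i ∈ Finset.range m, i) :=
      Wt_topC r k h m ε (by omega) (by omega : h = m * r + ε) hεr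
    have hWtt' : Wt k (topC r k h') = m' * ε' + r * (∑ i ∈ Finset.range m', i) :=
      Wt_topC r k h' m' ε' (by omega) (by omega : h' = m' * r + ε') hε'r
    have zn : ((Wt k c0 : ℕ) : ℤ) = ((Wt k c1 : ℕ) : ℤ) + n := by exact_mod_cast hWtn
    have Gm := gauss m
    have Gm' := gauss m'
    have zWt : ((Wt k c1 : ℕ) : ℤ) = m * ε + r * ((∑ i ∈ Finset.range m, i : ℕ) : ℤ) := by
      rw [hWtt]; push_cast; ring
    have zWt' : ((Wt k (topC r k h') : ℕ) : ℤ)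
        = m' * ε' + r * ((∑ i ∈ Finset.range m', i : ℕ) : ℤ) := by
      rw [hWtt']; push_cast; ring
    have zW0 : ((Wt k c0 : ℕ) : ℤ)
        = ((Wt k (botC r δ) : ℕ) : ℤ) + ((Wt k (topC r k h') : ℕ) : ℤ) := by
      exact_mod_cast congrArg (Nat.cast (R := ℤ)) hWt0
    rcases le_or_gt ε' ε with hcase | hcase
    · -- case A : ε' ≤ ε, q = m - m'
      rw [max_eq_left (show ((ε':ℕ):ℤ) ≤ ((ε:ℕ):ℤ) by omega)]
      set q := m - m' with hq_def
      clear_value q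
      have hqm : (m - m') * r + m' * r = m * r := by
        rw [← Nat.add_mul]
        congr 1
        omega
      have hδeq : δ = q * r + (ε - ε') := by
        simp only [hq_def]
        omega
      have hqk2 : q + 1 ≤ k := by omega
      have hWtb := Wt_botC r k δ q (ε - ε') hqk2 hδeq (by omega)
      have Gq := gauss q
      have zq : ((q:ℕ):ℤ) = (m:ℤ) - m' := by simp only [hq_def]; omega
      have ck1q : ((k - 1 - q : ℕ) : ℤ) = (k:ℤ) - 1 - q := by omega
      have zδ : ((δ:ℕ):ℤ) = (r:ℤ) * ((m:ℤ) - m') + ((ε:ℤ) - ε') := by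
        have : ((δ:ℕ):ℤ) = (h:ℤ) - h' := by omega
        rw [this]
        have zh : ((h:ℕ):ℤ) = r * m + ε := by exact_mod_cast hmr.symm
        have zh' : ((h':ℕ):ℤ) = r * m' + ε' := by exact_mod_cast hm'r.symm
        rw [zh, zh']
        ring
      have zWb : ((Wt k (botC r δ) : ℕ) : ℤ)
          = r * (((∑ i ∈ Finset.range q, i : ℕ) : ℤ) + q) + δ * ((k:ℤ) - 1 - q) := by
        rw [hWtb]
        push_cast [ck1q]
        ring
      rw [zδ, zq] at zWb
      rw [zq] at Gq
      have rGq : (r:ℤ) * (2 * ((∑ i ∈ Finset.range q, i : ℕ) : ℤ)) = r * ((((m:ℕ):ℤ) - ((m':ℕ):ℤ)) * (((m:ℕ):ℤ) - ((m':ℕ):ℤ)) - (((m:ℕ):ℤ) - ((m':ℕ):ℤ))) := by rw [Gq]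
      have rGm : (r:ℤ) * (2 * ((∑ i ∈ Finset.range m, i : ℕ) : ℤ)) = r * (((m:ℕ):ℤ) * ((m:ℕ):ℤ) - ((m:ℕ):ℤ)) := by rw [Gm]
      have rGm' : (r:ℤ) * (2 * ((∑ i ∈ Finset.range m', i : ℕ) : ℤ)) = r * (((m':ℕ):ℤ) * ((m':ℕ):ℤ) - ((m':ℕ):ℤ)) := by rw [Gm']
      linarith [zn, zWt, zWt', zW0, zWb, rGq, rGm, rGm']
    · -- case B : ε < ε', q = m - m' - 1
      rw [max_eq_right (show ((ε:ℕ):ℤ) ≤ ((ε':ℕ):ℤ) by omega)]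
      have hm'm2 : m' < m := by
        rcases Nat.eq_or_lt_of_le hm'm with he | hl
        · subst he
          omega
        · exact hl
      set q := m - m' - 1 with hq_def
      clear_value q
      have hqm : (m - m' - 1) * r + m' * r + r = m * r := by
        rw [← Nat.add_mul, ← Nat.succ_mul]
        congr 1
        omega
      have hδeq : δ = q * r + (r - (ε' - ε)) := by
        simp only [hq_def]
        omega
      have hqk2 : q + 1 ≤ k := by omega
      have hWtb := Wt_botC r k δ q (r - (ε' - ε)) hqk2 hδeq (by omega)
      have Gq := gauss q
      have zq : ((q:ℕ):ℤ) = (m:ℤ) - m' - 1 := by simp only [hq_def]; omega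
      have ck1q : ((k - 1 - q : ℕ) : ℤ) = (k:ℤ) - 1 - q := by omega
      have zδ : ((δ:ℕ):ℤ) = (r:ℤ) * ((m:ℤ) - m') + ((ε:ℤ) - ε') := by
        have : ((δ:ℕ):ℤ) = (h:ℤ) - h' := by omega
        rw [this]
        have zh : ((h:ℕ):ℤ) = r * m + ε := by exact_mod_cast hmr.symm
        have zh' : ((h':ℕ):ℤ) = r * m' + ε' := by exact_mod_cast hm'r.symm
        rw [zh, zh']
        ring
      have zWb : ((Wt k (botC r δ) : ℕ) : ℤ)
          = r * (((∑ i ∈ Finset.range q, i : ℕ) : ℤ) + q) + δ * ((k:ℤ) - 1 - q) := by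
        rw [hWtb]
        push_cast [ck1q]
        ring
      rw [zδ, zq] at zWb
      rw [zq] at Gq
      have rGq : (r:ℤ) * (2 * ((∑ i ∈ Finset.range q, i : ℕ) : ℤ)) = r * ((((m:ℕ):ℤ) - ((m':ℕ):ℤ) - 1) * (((m:ℕ):ℤ) - ((m':ℕ):ℤ) - 1) - (((m:ℕ):ℤ) - ((m':ℕ):ℤ) - 1)) := by rw [Gq]
      have rGm : (r:ℤ) * (2 * ((∑ i ∈ Finset.range m, i : ℕ) : ℤ)) = r * (((m:ℕ):ℤ) * ((m:ℕ):ℤ) - ((m:ℕ):ℤ)) := by rw [Gm]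
      have rGm' : (r:ℤ) * (2 * ((∑ i ∈ Finset.range m', i : ℕ) : ℤ)) = r * (((m':ℕ):ℤ) * ((m':ℕ):ℤ) - ((m':ℕ):ℤ)) := by rw [Gm']
      have hslack : (0:ℤ) ≤ ((ε':ℤ) - ε) * ((m:ℤ) - m' - 1) := by
        apply mul_nonneg
        · omega
        · omega
      linarith [zn, zWt, zWt', zW0, zWb, rGq, rGm, rGm', hslack]
  · -- properties
    intro x hx
    obtain ⟨hwit, hlow, hhigh⟩ := hS x hx
    refine ⟨hwit, ?_, hhigh⟩
    have heq0 : sumc a k c0 = sumc a k (botC r δ) + sumc a k (topC r k h') := by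
      simp only [hc0]
      exact sumc_add a k _ _
    have hbot1 : (δ : ℤ) ≤ sumc a k (botC r δ) := by
      have h1 : (δ:ℤ) = ((Fcum (botC r δ) k : ℕ) : ℤ) := by
        rw [Fcum_botC, min_eq_left (by omega)]
      rw [h1]
      unfold sumc Fcum
      push_cast
      apply Finset.sum_le_sum
      intro j hj
      have haj := ha1 j (Finset.mem_range.1 hj)
      have hbn : (0:ℤ) ≤ ((botC r δ j : ℕ):ℤ) := Nat.cast_nonneg _
      exact le_mul_of_one_le_right hbn haj
    have : sumc a k (topC r k h') < sumc a k c0 := by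
      rw [heq0]
      have : (1:ℤ) ≤ δ := by omega
      linarith
    linarith

lemma config_mem_genSumset (k r h : ℕ) (A : Finset ℤ) (a : ℕ → ℤ)
    (haA : ∀ j, j < k → a j ∈ A)
    (hinj : ∀ i j, i < k → j < k → a i = a j → i = j)
    (hsurj : ∀ x ∈ A, ∃ j, j < k ∧ a j = x)
    (c : ℕ → ℕ) (hv : ∀ j, c j ≤ r) (htot : Fcum c k = h) :
    sumc a k c ∈ genSumset r h A := by
  classical
  set lam : ℤ → ℕ := fun x => ∑ j ∈ Finset.range k, if a j = x then c j else 0 with hlam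
  have hlam_at : ∀ i, i < k → lam (a i) = c i := by
    intro i hik
    simp only [hlam]
    rw [Finset.sum_eq_single i]
    · rw [if_pos rfl]
    · intro j hj hne
      rw [if_neg (fun he => hne (hinj j i (Finset.mem_range.1 hj) hik he))]
    · intro hi
      exact absurd (Finset.mem_range.2 hik) hi
  refine ⟨lam, ?_, ?_, ?_, ?_⟩
  · intro x
    by_cases hex : ∃ i, i < k ∧ a i = x
    · obtain ⟨i, hik, hix⟩ := hex
      rw [← hix, hlam_at i hik]
      exact hv i
    · push_neg at hex
      have : lam x = 0 := by
        simp only [hlam]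
        exact Finset.sum_eq_zero (fun j hj => by
          rw [if_neg (hex j (Finset.mem_range.1 hj))])
      omega
  · intro x hx
    simp only [hlam]
    apply Finset.sum_eq_zero
    intro j hj
    have hne : a j ≠ x := by
      intro he
      rw [← he] at hx
      exact hx (haA j (Finset.mem_range.1 hj))
    rw [if_neg hne]
  · -- total
    have : ∑ x ∈ A, lam x = ∑ j ∈ Finset.range k, c j := by
      simp only [hlam]
      rw [Finset.sum_comm]
      apply Finset.sum_congr rfl
      intro j hj
      have hjA : a j ∈ A := haA j (Finset.mem_range.1 hj)
      rw [show (∑ x ∈ A, if a j = x then c j else 0)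
          = ∑ x ∈ A, if x = a j then c j else 0 from
        Finset.sum_congr rfl (fun x _ => if_congr eq_comm rfl rfl)]
      rw [Finset.sum_ite_eq' A (a j) (fun _ => c j), if_pos hjA]
    rw [this]
    exact htot
  · -- weighted sum
    have h1 : ∀ x ∈ A, (lam x : ℤ) * x
        = ∑ j ∈ Finset.range k, (if a j = x then (c j : ℤ) * x else 0) := by
      intro x _
      simp only [hlam]
      push_cast
      rw [Finset.sum_mul]
      apply Finset.sum_congr rfl
      intro j _
      split_ifs
      · ring
      · ring
    rw [Finset.sum_congr rfl h1, Finset.sum_comm]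
    apply Finset.sum_congr rfl
    intro j hj
    have hjA : a j ∈ A := haA j (Finset.mem_range.1 hj)
    rw [show (∑ x ∈ A, if a j = x then (c j : ℤ) * x else 0)
        = ∑ x ∈ A, if x = a j then (c j : ℤ) * x else 0 from
      Finset.sum_congr rfl (fun x _ => if_congr eq_comm rfl rfl)]
    rw [Finset.sum_ite_eq' A (a j) (fun x => (c j : ℤ) * x), if_pos hjA]

lemma sumc_topC_mono (r k : ℕ) (a : ℕ → ℤ) (ha0 : ∀ j, j < k → 0 ≤ a j)
    (h1 h2 : ℕ) (hle : h1 ≤ h2) :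
    sumc a k (topC r k h1) ≤ sumc a k (topC r k h2) := by
  unfold sumc
  apply Finset.sum_le_sum
  intro j hj
  have hjk : j < k := Finset.mem_range.1 hj
  have hpt : topC r k h1 j ≤ topC r k h2 j := by
    simp only [topC, if_pos hjk]
    exact min_le_min le_rfl (Nat.sub_le_sub_right hle _)
  exact mul_le_mul_of_nonneg_right (by exact_mod_cast hpt) (ha0 j hjk)

theorem stmt_0 (k t r : ℕ) (A : Finset ℤ) (H : Finset ℕ) (h : ℕ → ℕ)
    (hk : 3 ≤ k) (hAcard : A.card = k) (hApos : ∀ a ∈ A, 0 < a)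
    (ht : 2 ≤ t) (hHcard : H.card = t) (hHpos : ∀ x ∈ H, 0 < x)
    (h0 : h 0 = 0) (hmono : StrictMonoOn h (Set.Icc 0 t))
    (hHim : H = (Finset.Icc 1 t).image h)
    (hr1 : 1 ≤ r) (hrmax : r ≤ h t) (hmax : h t ≤ (k - 1) * r - 1) :
    Lbound r h t k ≤ ((HSumset r H A).ncard : ℤ) := by
  classical
  have hAne : A.Nonempty := Finset.card_pos.1 (by omega)
  set e := A.orderIsoOfFin hAcard with he_def
  set a : ℕ → ℤ := fun j => if hj : j < k then (e ⟨j, hj⟩ : ℤ) else 0 with ha_def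
  have ha : ∀ i j : ℕ, i < j → j < k → a i < a j := by
    intro i j hij hjk
    have hik : i < k := lt_trans hij hjk
    simp only [ha_def, dif_pos hik, dif_pos hjk]
    have h1 : (⟨i, hik⟩ : Fin k) < ⟨j, hjk⟩ := Fin.mk_lt_mk.2 hij
    exact_mod_cast e.strictMono h1
  have haA : ∀ j, j < k → a j ∈ A := by
    intro j hj
    simp only [ha_def, dif_pos hj]
    exact (e ⟨j, hj⟩).2
  have ha1 : ∀ j, j < k → 1 ≤ a j := by
    intro j hj
    exact hApos _ (haA j hj)
  have ha0 : ∀ j, j < k → 0 ≤ a j := fun j hj => le_trans zero_le_one (ha1 j hj)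
  have hinj : ∀ i j : ℕ, i < k → j < k → a i = a j → i = j := by
    intro i j hik hjk heq
    rcases lt_trichotomy i j with h1 | h1 | h1
    · exact absurd heq (ne_of_lt (ha i j h1 hjk))
    · exact h1
    · exact absurd heq.symm (ne_of_lt (ha j i h1 hik))
  have hsurj : ∀ x ∈ A, ∃ j, j < k ∧ a j = x := by
    intro x hx
    refine ⟨(e.symm ⟨x, hx⟩ : Fin k).1, (e.symm ⟨x, hx⟩).2, ?_⟩
    simp only [ha_def, dif_pos (e.symm ⟨x, hx⟩).2]
    rw [show (⟨(e.symm ⟨x, hx⟩ : Fin k).1, (e.symm ⟨x, hx⟩).2⟩ : Fin k)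
        = e.symm ⟨x, hx⟩ from rfl]
    rw [OrderIso.apply_symm_apply]
  -- monotonicity of h on indices
  have hmemIcc : ∀ i : ℕ, i ≤ t → i ∈ Set.Icc 0 t := fun i hi => ⟨Nat.zero_le i, hi⟩
  have hhle : ∀ i j : ℕ, i ≤ j → j ≤ t → h i ≤ h j := by
    intro i j hij hjt
    rcases Nat.eq_or_lt_of_le hij with h1 | h1
    · rw [h1]
    · exact le_of_lt (hmono (hmemIcc i (by omega)) (hmemIcc j hjt) h1)
  -- finiteness of HSumset
  set M : ℤ := A.max' hAne with hM_def
  have hM1 : 1 ≤ M := hApos _ (A.max'_mem hAne)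
  have hsubIcc : HSumset r H A ⊆ Set.Icc (0:ℤ) ((h t : ℤ) * M) := by
    intro x hx
    simp only [HSumset, Set.mem_iUnion] at hx
    obtain ⟨h', hh', hxg⟩ := hx
    obtain ⟨lam, hle, hzero, htot, hsum⟩ := hxg
    have hh'le : h' ≤ h t := by
      rw [hHim] at hh'
      obtain ⟨i, hi, hieq⟩ := Finset.mem_image.1 hh'
      rw [← hieq]
      exact hhle i t (Finset.mem_Icc.1 hi).2 le_rfl
    constructor
    · rw [← hsum]
      apply Finset.sum_nonneg
      intro b hb
      exact mul_nonneg (Nat.cast_nonneg _) (le_of_lt (hApos b hb))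
    · rw [← hsum]
      calc ∑ b ∈ A, (lam b : ℤ) * b ≤ ∑ b ∈ A, (lam b : ℤ) * M := by
            apply Finset.sum_le_sum
            intro b hb
            exact mul_le_mul_of_nonneg_left (A.le_max' b hb) (Nat.cast_nonneg _)
        _ = ((∑ b ∈ A, lam b : ℕ) : ℤ) * M := by
            rw [← Finset.sum_mul]
            push_cast
            ring
        _ = (h' : ℤ) * M := by rw [htot]
        _ ≤ (h t : ℤ) * M := by
            apply mul_le_mul_of_nonneg_right _ (by omega)
            exact_mod_cast hh'le
  have hfin : (HSumset r H A).Finite :=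
    Set.Finite.subset (Set.finite_Icc _ _) hsubIcc
  -- per-block sets
  have hblocks : ∀ i : ℕ, ∃ S : Finset ℤ, i ∈ Finset.Icc 1 t →
      (((r:ℤ) * (((h i / r : ℕ) : ℤ) - ((h (i-1) / r : ℕ) : ℤ))
          * ((k : ℤ) - ((h i / r : ℕ) : ℤ))
        + (((h i % r : ℕ) : ℤ) - ((h (i-1) % r : ℕ) : ℤ))
          * ((k : ℤ) - ((h i / r : ℕ) : ℤ) - 1)
        - ((max (h i % r) (h (i-1) % r) : ℕ) : ℤ)
          * (((h i / r : ℕ) : ℤ) - ((h (i-1) / r : ℕ) : ℤ))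
        + 1) ≤ (S.card : ℤ))
      ∧ ∀ x ∈ S, x ∈ genSumset r (h i) A
        ∧ sumc a k (topC r k (h (i-1))) < x ∧ x ≤ sumc a k (topC r k (h i)) := by
    intro i
    by_cases hi : i ∈ Finset.Icc 1 t
    · obtain ⟨hi1, hit⟩ := Finset.mem_Icc.1 hi
      have hlt : h (i-1) < h i :=
        hmono (hmemIcc (i-1) (by omega)) (hmemIcc i hit) (by omega)
      have hub : h i ≤ (k - 1) * r - 1 := le_trans (hhle i t hit le_rfl) hmax
      obtain ⟨S, hcard, hprops⟩ := block k r (h (i-1)) (h i) hr1 hk a ha ha1 hlt hub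
      refine ⟨S, fun _ => ⟨hcard, ?_⟩⟩
      intro x hx
      obtain ⟨⟨c, hvc, htotc, hsumc⟩, hlow, hhigh⟩ := hprops x hx
      refine ⟨?_, hlow, hhigh⟩
      rw [← hsumc]
      exact config_mem_genSumset k r (h i) A a haA hinj hsurj c hvc htotc
    · exact ⟨∅, fun hmem => absurd hmem hi⟩
  choose S hS using hblocks
  set T := (Finset.Icc 1 t).biUnion S with hT_def
  have hdisj : ∀ i ∈ Finset.Icc 1 t, ∀ j ∈ Finset.Icc 1 t, i ≠ j →
      Disjoint (S i) (S j) := by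
    have haux : ∀ i j, i ∈ Finset.Icc 1 t → j ∈ Finset.Icc 1 t → i < j →
        Disjoint (S i) (S j) := by
      intro i j hi hj hij
      obtain ⟨hi1, hit⟩ := Finset.mem_Icc.1 hi
      obtain ⟨hj1, hjt⟩ := Finset.mem_Icc.1 hj
      rw [Finset.disjoint_left]
      intro x hxi hxj
      have h1 := ((hS i hi).2 x hxi).2.2
      have h2 := ((hS j hj).2 x hxj).2.1
      have h3 : h i ≤ h (j - 1) := hhle i (j-1) (by omega) (by omega)
      have h4 : sumc a k (topC r k (h i)) ≤ sumc a k (topC r k (h (j-1))) :=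
        sumc_topC_mono r k a ha0 (h i) (h (j-1)) h3
      linarith
    intro i hi j hj hne
    rcases lt_or_gt_of_ne hne with h1 | h1
    · exact haux i j hi hj h1
    · exact (haux j i hj hi h1).symm
  have hcardT : T.card = ∑ i ∈ Finset.Icc 1 t, (S i).card :=
    Finset.card_biUnion hdisj
  have hLb : Lbound r h t k ≤ (T.card : ℤ) := by
    rw [hcardT]
    push_cast
    unfold Lbound
    apply Finset.sum_le_sum
    intro i hi
    exact (hS i hi).1
  have hTsub : (T : Set ℤ) ⊆ HSumset r H A := by
    intro x hx
    rw [Finset.mem_coe, hT_def, Finset.mem_biUnion] at hx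
    obtain ⟨i, hi, hxS⟩ := hx
    have hmem := ((hS i hi).2 x hxS).1
    simp only [HSumset, Set.mem_iUnion]
    refine ⟨h i, ?_, hmem⟩
    rw [hHim]
    exact Finset.mem_image.2 ⟨i, hi, rfl⟩
  have hcard_le : T.card ≤ (HSumset r H A).ncard := by
    rw [← Set.ncard_coe_finset T]
    exact Set.ncard_le_ncard hTsub hfin
  have : (T.card : ℤ) ≤ ((HSumset r H A).ncard : ℤ) := by exact_mod_cast hcard_le
  linarith
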